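/- Let G be a graph with a perfect matching M. Then M is the unique fractional perfect matching of G if and only if the associated local digraph ldg(G, M) is acyclic. -/

import Mathlib

/-- A locally directed graph (here without a looplessness requirement): a multigraph
together with a sign (`Bool`) for each incident vertex–edge pair. -/
structure LocalDigraph (V E : Type*) where
  fst : E → V
  snd : E → V
  sgnFst : E → Bool
  sgnSnd : E → Bool

namespace LocalDigraph

variable {V E : Type*} [DecidableEq V]

/-- The sign of edge `e` at an incident vertex `x`. -/
def sgn (G : LocalDigraph V E) (x : V) (e : E) : Bool :=
  if x = G.fst e then G.sgnFst e else G.sgnSnd e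

/-- A locally directed closed walk of length `t`. -/
def IsClosedWalk (G : LocalDigraph V E) {t : ℕ} (v : ZMod t → V) (e : ZMod t → E) : Prop :=
  ∀ i : ZMod t,
    ((G.fst (e i) = v i ∧ G.snd (e i) = v (i + 1)) ∨
      (G.snd (e i) = v i ∧ G.fst (e i) = v (i + 1))) ∧
    G.sgn (v i) (e i) ≠ G.sgn (v i) (e (i - 1))

/-- A local digraph is acyclic if it has no locally directed closed walk. -/
def Acyclic (G : LocalDigraph V E) : Prop :=
  ¬ ∃ (t : ℕ) (_ : 0 < t) (v : ZMod t → V) (e : ZMod t → E), G.IsClosedWalk v e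

end LocalDigraph

/-- Given signs `σ` for the vertices and the matching involution `f`, `rep σ f x` is the
distinguished (`+`-signed) endpoint of the matching edge containing `x`, which
represents that matching edge. -/
def rep {V : Type*} (σ : V → Bool) (f : V → V) (x : V) : V := if σ x then x else f x

/-- The local digraph `ldg(G, M)` associated to a graph `G` with a perfect matching `M`:
vertices are (represented by) matching edges, edges are the edges of `G` outside `M`,
and the sign of such an edge at a matching edge is the sign `σ` of the endpoint it uses. -/
def ldg {V : Type*} [DecidableEq V] (G : SimpleGraph V) (M : G.Subgraph)
    (σ : V → Bool) (f : V → V) :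
    LocalDigraph V {p : V × V // G.Adj p.1 p.2 ∧ ¬ M.Adj p.1 p.2} where
  fst e := rep σ f e.1.1
  snd e := rep σ f e.1.2
  sgnFst e := σ e.1.1
  sgnSnd e := σ e.1.2

open Classical in
/-- `w` is a fractional perfect matching of `G`: a `[0,1]`-valued weight on edges with
total weight `1` at every vertex. -/
noncomputable def IsFPM {V : Type*} [Fintype V] (G : SimpleGraph V) (w : Sym2 V → ℝ) : Prop :=
  (∀ e, 0 ≤ w e) ∧ (∀ e, w e ≤ 1) ∧ (∀ e, e ∉ G.edgeSet → w e = 0) ∧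
    ∀ v : V, ∑ e ∈ Finset.univ.filter (fun e : Sym2 V => v ∈ e), w e = 1

open Classical in
/-- The indicator weight function of the matching `M`. -/
noncomputable def matchInd {V : Type*} {G : SimpleGraph V} (M : G.Subgraph) : Sym2 V → ℝ :=
  fun e => if e ∈ M.edgeSet then 1 else 0


set_option linter.unusedSectionVars false
section Aux
open SimpleGraph

variable {V : Type*} [Fintype V] [DecidableEq V] {G : SimpleGraph V} {M : G.Subgraph}
  {σ : V → Bool} {f : V → V}

lemma adj_eq_f (hM : M.IsPerfectMatching) (hf : ∀ v, M.Adj v (f v))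
    {u y : V} (h : M.Adj u y) : y = f u := by
  obtain ⟨t, _, ht⟩ := Subgraph.isPerfectMatching_iff.mp hM u
  rw [ht y h, ht (f u) (hf u)]

lemma f_invol (hM : M.IsPerfectMatching) (hf : ∀ v, M.Adj v (f v)) (x : V) : f (f x) = x :=
  (adj_eq_f hM hf (hf x).symm).symm

lemma f_ne (hf : ∀ v, M.Adj v (f v)) (x : V) : f x ≠ x :=
  fun h => (M.adj_sub (hf x)).ne' h

lemma sigma_f (hf : ∀ v, M.Adj v (f v)) (hσ : ∀ u v, M.Adj u v → σ u ≠ σ v) (x : V) :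
    σ x ≠ σ (f x) := hσ x (f x) (hf x)

lemma rep_or (σ : V → Bool) (f : V → V) (x : V) : rep σ f x = x ∨ rep σ f x = f x := by
  unfold rep; split <;> simp

lemma rep_f (hM : M.IsPerfectMatching) (hf : ∀ v, M.Adj v (f v))
    (hσ : ∀ u v, M.Adj u v → σ u ≠ σ v) (x : V) : rep σ f (f x) = rep σ f x := by
  have hs := sigma_f hf hσ x
  unfold rep
  rcases hb : σ x with _ | _ <;> rcases hb' : σ (f x) with _ | _ <;>
    simp_all [f_invol hM hf x]

lemma rep_eq_iff (hM : M.IsPerfectMatching) (hf : ∀ v, M.Adj v (f v))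
    (hσ : ∀ u v, M.Adj u v → σ u ≠ σ v) (x y : V) :
    rep σ f x = rep σ f y ↔ (x = y ∨ x = f y) := by
  constructor
  · intro h
    unfold rep at h
    rcases hb : σ x with _ | _ <;> rcases hb' : σ y with _ | _ <;> rw [hb, hb'] at h <;>
      simp only [if_true, if_false, Bool.false_eq_true, ite_false, ite_true] at h
    · left
      have := congrArg f h
      rwa [f_invol hM hf, f_invol hM hf] at this
    · right
      rw [← h, f_invol hM hf]
    · right; exact h
    · left; exact h
  · rintro (rfl | rfl)
    · rfl
    · exact rep_f hM hf hσ y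

lemma rep_ne_of_edge (hM : M.IsPerfectMatching) (hf : ∀ v, M.Adj v (f v))
    (hσ : ∀ u v, M.Adj u v → σ u ≠ σ v)
    (p : {p : V × V // G.Adj p.1 p.2 ∧ ¬ M.Adj p.1 p.2}) :
    rep σ f p.1.1 ≠ rep σ f p.1.2 := by
  intro h
  rcases (rep_eq_iff hM hf hσ _ _).mp h with h' | h'
  · exact p.2.1.ne h'
  · exact p.2.2 (h' ▸ (hf p.1.2).symm)

lemma matchInd_vertex_sum (hM : M.IsPerfectMatching) (hf : ∀ v, M.Adj v (f v)) (u : V) :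
    ∑ e ∈ Finset.univ.filter (fun e : Sym2 V => u ∈ e), matchInd M e = 1 := by
  classical
  have hfilter : (Finset.univ.filter (fun e : Sym2 V => u ∈ e)).filter
      (fun e => e ∈ M.edgeSet) = {s(u, f u)} := by
    ext e
    simp only [Finset.mem_filter, Finset.mem_univ, true_and, Finset.mem_singleton]
    constructor
    · rintro ⟨hue, heM⟩
      induction e with
      | _ x y =>
        rw [Subgraph.mem_edgeSet] at heM
        rcases Sym2.mem_iff.mp hue with rfl | rfl
        · rw [adj_eq_f hM hf heM]
        · rw [adj_eq_f hM hf heM.symm, Sym2.eq_swap]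
    · rintro rfl
      exact ⟨Sym2.mem_mk_left u (f u), Subgraph.mem_edgeSet.mpr (hf u)⟩
  calc ∑ e ∈ Finset.univ.filter (fun e : Sym2 V => u ∈ e), matchInd M e
      = ((Finset.univ.filter (fun e : Sym2 V => u ∈ e)).filter
          (fun e => e ∈ M.edgeSet)).card := by
        rw [← Finset.sum_boole]
        apply Finset.sum_congr rfl
        intro e _
        by_cases h : e ∈ M.edgeSet
        · rw [matchInd, if_pos h]
        · rw [matchInd, if_neg h]
    _ = 1 := by rw [hfilter]; simp

lemma fpm_sum {w : Sym2 V → ℝ} (hw : IsFPM G w) (x : V) :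
    ∑ e ∈ Finset.univ.filter (fun e : Sym2 V => x ∈ e), w e = 1 := by
  have h := hw.2.2.2 x
  convert h using 2
  exact (Finset.filter_congr_decidable _ _ _).trans (Finset.filter_congr_decidable _ _ _).symm

lemma sym2_exists (z : Sym2 V) : ∃ x y, z = s(x, y) := by
  induction z using Sym2.inductionOn with
  | _ x y => exact ⟨x, y, rfl⟩

lemma two_edge_bound {w : Sym2 V → ℝ} (hw : IsFPM G w) {x : V} {e1 e2 : Sym2 V}
    (h1 : x ∈ e1) (h2 : x ∈ e2) (hne : e1 ≠ e2) : w e1 + w e2 ≤ 1 := by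
  classical
  calc w e1 + w e2 = ∑ e ∈ ({e1, e2} : Finset (Sym2 V)), w e := by
        rw [Finset.sum_pair hne]
    _ ≤ ∑ e ∈ Finset.univ.filter (fun e : Sym2 V => x ∈ e), w e := by
        apply Finset.sum_le_sum_of_subset_of_nonneg
        · intro e he
          simp only [Finset.mem_insert, Finset.mem_singleton] at he
          rcases he with rfl | rfl <;> simp [Finset.mem_filter, h1, h2]
        · exact fun e _ _ => hw.1 e
    _ = 1 := fpm_sum hw x

lemma next_ex (hM : M.IsPerfectMatching) (hf : ∀ v, M.Adj v (f v))
    {w : Sym2 V → ℝ} (hw : IsFPM G w) (x : V) (hlt : w s(x, f x) < 1) :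
    ∃ c, G.Adj x c ∧ ¬ M.Adj x c ∧ 0 < w s(x, c) := by
  classical
  have hsum := fpm_sum hw x
  by_contra hcon
  push_neg at hcon
  have hz : ∀ e ∈ Finset.univ.filter (fun e : Sym2 V => x ∈ e), e ≠ s(x, f x) → w e = 0 := by
    intro e he hne
    simp only [Finset.mem_filter, Finset.mem_univ, true_and] at he
    obtain ⟨c, rfl⟩ := Sym2.mem_iff_exists.mp he
    by_cases hG : G.Adj x c
    · by_cases hA : M.Adj x c
      · exact absurd (by rw [adj_eq_f hM hf hA]) hne
      · exact le_antisymm (hcon c hG hA) (hw.1 _)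
    · exact hw.2.2.1 _ (fun hmem => hG (G.mem_edgeSet.mp hmem))
  have hmem : s(x, f x) ∈ Finset.univ.filter (fun e : Sym2 V => x ∈ e) := by
    simp [Finset.mem_filter]
  have := Finset.sum_eq_single_of_mem s(x, f x) hmem hz
  rw [hsum] at this
  linarith

lemma matching_lt_one (hf : ∀ v, M.Adj v (f v)) {w : Sym2 V → ℝ} (hw : IsFPM G w)
    {a b : V} (hG : G.Adj a b) (hMab : ¬ M.Adj a b) (hpos : 0 < w s(a, b)) :
    w s(b, f b) < 1 := by
  have hne : s(b, f b) ≠ s(a, b) := by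
    intro h
    rw [Sym2.eq_iff] at h
    rcases h with ⟨h1, h2⟩ | ⟨h1, h2⟩
    · exact f_ne hf b h2
    · exact hMab (h2 ▸ hf b).symm
  have h2 := two_edge_bound hw (Sym2.mem_mk_left b (f b)) (Sym2.mem_mk_right a b) hne
  linarith

lemma step_ex (hM : M.IsPerfectMatching) (hf : ∀ v, M.Adj v (f v))
    {w : Sym2 V → ℝ} (hw : IsFPM G w) {a b : V}
    (hG : G.Adj a b) (hMab : ¬ M.Adj a b) (hpos : 0 < w s(a, b)) :
    ∃ c, G.Adj (f b) c ∧ ¬ M.Adj (f b) c ∧ 0 < w s(f b, c) := by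
  have hlt : w s(f b, f (f b)) < 1 := by
    have heq : s(f b, f (f b)) = s(b, f b) := by
      rw [f_invol hM hf b, Sym2.eq_swap]
    rw [heq]
    exact matching_lt_one hf hw hG hMab hpos
  exact next_ex hM hf hw (f b) hlt

lemma start_ex (hM : M.IsPerfectMatching) (hf : ∀ v, M.Adj v (f v))
    {w : Sym2 V → ℝ} (hw : IsFPM G w) (hne : w ≠ matchInd M) :
    ∃ a b, G.Adj a b ∧ ¬ M.Adj a b ∧ 0 < w s(a, b) := by
  classical
  obtain ⟨e0, he0⟩ := Function.ne_iff.mp hne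
  obtain ⟨x, y, rfl⟩ := sym2_exists e0
  by_cases hM0 : s(x, y) ∈ M.edgeSet
  · have hlt : w s(x, y) < 1 :=
      lt_of_le_of_ne (hw.2.1 _) (by rw [matchInd, if_pos hM0] at he0; exact he0)
    have hxy : M.Adj x y := SimpleGraph.Subgraph.mem_edgeSet.mp hM0
    have hyx : y = f x := adj_eq_f hM hf hxy
    subst hyx
    obtain ⟨c, h1, h2, h3⟩ := next_ex hM hf hw x hlt
    exact ⟨x, c, h1, h2, h3⟩
  · have h0 : w s(x, y) ≠ 0 := by rw [matchInd, if_neg hM0] at he0; exact he0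
    have hpos : 0 < w s(x, y) := lt_of_le_of_ne (hw.1 _) (Ne.symm h0)
    have hGe : s(x, y) ∈ G.edgeSet := by
      by_contra h; exact h0 (hw.2.2.1 _ h)
    exact ⟨x, y, G.mem_edgeSet.mp hGe,
      fun h => hM0 (SimpleGraph.Subgraph.mem_edgeSet.mpr h), hpos⟩

lemma exists_walk (hM : M.IsPerfectMatching) (hf : ∀ v, M.Adj v (f v))
    (hσ : ∀ u v, M.Adj u v → σ u ≠ σ v)
    {w : Sym2 V → ℝ} (hw : IsFPM G w) (hne : w ≠ matchInd M) :
    ∃ (t : ℕ) (_ : 0 < t) (v : ZMod t → V)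
      (e : ZMod t → {p : V × V // G.Adj p.1 p.2 ∧ ¬ M.Adj p.1 p.2}),
      (ldg G M σ f).IsClosedWalk v e := by
  classical
  obtain ⟨a0, b0, hG0, hM0, hpos0⟩ := start_ex hM hf hw hne
  let P := {q : {p : V × V // G.Adj p.1 p.2 ∧ ¬ M.Adj p.1 p.2} // 0 < w s(q.1.1, q.1.2)}
  have hstep : ∀ p : P, ∃ q : P, q.1.1.1 = f p.1.1.2 := by
    rintro ⟨⟨⟨a, b⟩, hG, hMab⟩, hpos⟩
    obtain ⟨c, h1, h2, h3⟩ := step_ex hM hf hw hG hMab hpos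
    exact ⟨⟨⟨(f b, c), h1, h2⟩, h3⟩, rfl⟩
  choose st hst using hstep
  let d : ℕ → P := fun n => st^[n] ⟨⟨(a0, b0), hG0, hM0⟩, hpos0⟩
  have hd : ∀ n, d (n + 1) = st (d n) := fun n => Function.iterate_succ_apply' st n _
  obtain ⟨i, j, hij, hdij⟩ : ∃ i j, i < j ∧ d i = d j := by
    obtain ⟨m, n, hmn, h⟩ := Finite.exists_ne_map_eq_of_infinite d
    rcases hmn.lt_or_gt with h' | h'
    · exact ⟨m, n, h', h⟩
    · exact ⟨n, m, h', h.symm⟩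
  set t := j - i with ht_def
  have ht : 0 < t := by omega
  haveI : NeZero t := ⟨ht.ne'⟩
  have hper : ∀ m, d (i + m + t) = d (i + m) := by
    intro m
    induction m with
    | zero =>
      have : i + 0 + t = j := by omega
      rw [this, ← hdij, Nat.add_zero]
    | succ k ih =>
      have e1 : i + (k + 1) + t = (i + k + t) + 1 := by omega
      rw [e1, hd, ih, show i + (k + 1) = (i + k) + 1 from by omega, hd]
  have hmul : ∀ c m, d (i + m + c * t) = d (i + m) := by
    intro c
    induction c with
    | zero => intro m; simp
    | succ k ih =>
      intro m
      calc d (i + m + (k + 1) * t) = d (i + (m + k * t) + t) := by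
            rw [show i + m + (k + 1) * t = i + (m + k * t) + t from by ring]
        _ = d (i + (m + k * t)) := hper _
        _ = d (i + m) := by
            rw [show i + (m + k * t) = i + m + k * t from by ring]; exact ih m
  have hmod : ∀ m, d (i + m) = d (i + m % t) := by
    intro m
    conv_lhs => rw [show m = m % t + m / t * t from (Nat.mod_add_div' m t).symm]
    rw [← Nat.add_assoc]
    exact hmul (m / t) (m % t)
  have hsucc : ∀ k : ZMod t, d (i + (k + 1).val) = d (i + k.val + 1) := by
    intro k
    have hval : (k + 1).val = (k.val + 1) % t := by
      rw [ZMod.val_add, ZMod.val_one_eq_one_mod]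
      conv_rhs => rw [Nat.add_mod]
      rw [Nat.mod_eq_of_lt (ZMod.val_lt k)]
    rw [hval, Nat.add_assoc]
    exact (hmod (k.val + 1)).symm
  have harr : ∀ n, (d (n + 1)).1.1.1 = f ((d n).1.1.2) := fun n => by rw [hd]; exact hst (d n)
  refine ⟨t, ht, fun k => rep σ f (d (i + k.val)).1.1.1, fun k => (d (i + k.val)).1, ?_⟩
  intro k
  constructor
  · left
    refine ⟨rfl, ?_⟩
    show rep σ f (d (i + k.val)).1.1.2 = rep σ f (d (i + (k + 1).val)).1.1.1
    rw [hsucc k, harr, rep_f hM hf hσ]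
  · have hprev : d (i + (k - 1).val + 1) = d (i + k.val) := by
      rw [← hsucc (k - 1), sub_add_cancel]
    have hcur1 : (d (i + k.val)).1.1.1 = f ((d (i + (k - 1).val)).1.1.2) := by
      rw [← hprev]; exact harr _
    simp only [LocalDigraph.sgn, ldg]
    rw [if_true]
    refine ne_of_ne_of_eq ?_ (if_neg ?_).symm
    · rw [hcur1]
      exact (sigma_f hf hσ _).symm
    · intro hC
      have h1 : rep σ f (d (i + k.val)).1.1.1 = rep σ f ((d (i + (k - 1).val)).1.1.2) := by
        rw [hcur1, rep_f hM hf hσ]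
      have := h1.symm.trans hC
      exact (rep_ne_of_edge hM hf hσ (d (i + (k - 1).val)).1) this.symm

lemma ind_pair (u x y : V) (hxy : x ≠ y) :
    (if u ∈ s(x, y) then (1 : ℝ) else 0) =
      (if x = u then (1 : ℝ) else 0) + (if y = u then (1 : ℝ) else 0) := by
  by_cases hx : x = u
  · by_cases hy : y = u
    · exact absurd (hx.trans hy.symm) hxy
    · simp [Sym2.mem_iff, hx, hy, eq_comm]
  · by_cases hy : y = u
    · simp [Sym2.mem_iff, hx, hy, eq_comm]
    · have hm : ¬ (u ∈ s(x, y)) := by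
        rw [Sym2.mem_iff]
        rintro (rfl | rfl)
        · exact hx rfl
        · exact hy rfl
      rw [if_neg hm, if_neg hx, if_neg hy]
      ring

lemma fpm_of_walk (hM : M.IsPerfectMatching) (hf : ∀ v, M.Adj v (f v))
    (hσ : ∀ u v, M.Adj u v → σ u ≠ σ v) {t : ℕ} (ht : 0 < t)
    (v : ZMod t → V) (e : ZMod t → {p : V × V // G.Adj p.1 p.2 ∧ ¬ M.Adj p.1 p.2})
    (hwalk : (ldg G M σ f).IsClosedWalk v e) :
    ∃ w', IsFPM G w' ∧ w' ≠ matchInd M := by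
  classical
  haveI : NeZero t := ⟨ht.ne'⟩
  have hnl : ∀ i, rep σ f (e i).1.1 ≠ rep σ f (e i).1.2 := fun i => rep_ne_of_edge hM hf hσ (e i)
  have hor : ∀ i, (rep σ f (e i).1.1 = v i ∧ rep σ f (e i).1.2 = v (i + 1)) ∨
      (rep σ f (e i).1.2 = v i ∧ rep σ f (e i).1.1 = v (i + 1)) := fun i => (hwalk i).1
  have hda : ∀ i : ZMod t, ∃ dp ar : V,
      ((dp = (e i).1.1 ∧ ar = (e i).1.2) ∨ (dp = (e i).1.2 ∧ ar = (e i).1.1)) ∧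
      rep σ f dp = v i ∧ rep σ f ar = v (i + 1) ∧
      (ldg G M σ f).sgn (v i) (e i) = σ dp ∧ (ldg G M σ f).sgn (v (i + 1)) (e i) = σ ar := by
    intro i
    rcases hor i with ⟨h1, h2⟩ | ⟨h1, h2⟩
    · refine ⟨(e i).1.1, (e i).1.2, Or.inl ⟨rfl, rfl⟩, h1, h2, ?_, ?_⟩
      · simp only [LocalDigraph.sgn, ldg]
        exact if_pos h1.symm
      · simp only [LocalDigraph.sgn, ldg]
        have hC : v (i + 1) ≠ rep σ f (e i).1.1 := fun hC => hnl i (hC.symm.trans h2.symm)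
        exact if_neg hC
    · refine ⟨(e i).1.2, (e i).1.1, Or.inr ⟨rfl, rfl⟩, h1, h2, ?_, ?_⟩
      · simp only [LocalDigraph.sgn, ldg]
        have hC : v i ≠ rep σ f (e i).1.1 := fun hC => hnl i (hC.symm.trans h1.symm)
        exact if_neg hC
      · simp only [LocalDigraph.sgn, ldg]
        exact if_pos h2.symm
  choose dep arr hpair hdep harr hsgn1 hsgn2 using hda
  have hdep_ne_arr : ∀ i, dep i ≠ arr i := by
    intro i
    rcases hpair i with ⟨h1, h2⟩ | ⟨h1, h2⟩ <;> rw [h1, h2]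
    · exact (e i).2.1.ne
    · exact (e i).2.1.ne.symm
  have hdf : ∀ i, dep i = f (arr (i - 1)) := by
    intro i
    have hs := (hwalk i).2
    rw [hsgn1 i] at hs
    have h2 := hsgn2 (i - 1)
    rw [sub_add_cancel] at h2
    rw [h2] at hs
    have hrep : rep σ f (dep i) = rep σ f (arr (i - 1)) := by
      rw [hdep i]
      have h3 := harr (i - 1)
      rw [sub_add_cancel] at h3
      rw [h3]
    rcases (rep_eq_iff hM hf hσ _ _).mp hrep with h | h
    · exact absurd (congrArg σ h) hs
    · exact h
  set cw : Sym2 V → ℝ := fun s => ∑ i : ZMod t,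
    ((if s = s((e i).1.1, (e i).1.2) then (1 : ℝ) else 0) -
      (if s = s(v (i + 1), f (v (i + 1))) then (1 : ℝ) else 0)) with hcw
  have heM : ∀ i : ZMod t, s((e i).1.1, (e i).1.2) ∉ M.edgeSet :=
    fun i h => (e i).2.2 (SimpleGraph.Subgraph.mem_edgeSet.mp h)
  have hmM : ∀ r : V, s(r, f r) ∈ M.edgeSet := fun r => SimpleGraph.Subgraph.mem_edgeSet.mpr (hf r)
  have heG : ∀ i : ZMod t, s((e i).1.1, (e i).1.2) ∈ G.edgeSet := fun i => G.mem_edgeSet.mpr (e i).2.1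
  have hmG : ∀ r : V, s(r, f r) ∈ G.edgeSet := fun r => G.mem_edgeSet.mpr (M.adj_sub (hf r))
  have ht1 : ∀ s ∈ M.edgeSet, ∀ i : ZMod t,
      (if s = s((e i).1.1, (e i).1.2) then (1 : ℝ) else 0) = 0 := by
    intro s hs i
    apply if_neg
    intro h
    rw [h] at hs
    exact heM i hs
  have ht2 : ∀ (s : Sym2 V), s ∉ M.edgeSet → ∀ i : ZMod t,
      (if s = s(v (i + 1), f (v (i + 1))) then (1 : ℝ) else 0) = 0 := by
    intro s hs i
    apply if_neg
    intro h
    rw [h] at hs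
    exact hs (hmM (v (i + 1)))
  have hind01 : ∀ (P : Prop) (_ : Decidable P),
      (0 : ℝ) ≤ (if P then (1 : ℝ) else 0) ∧ (if P then (1 : ℝ) else 0) ≤ 1 := by
    intro P hP; constructor <;> split <;> norm_num
  have htcast : (0 : ℝ) < (t : ℝ) := by exact_mod_cast ht
  have hsum_neg_t : ∑ _i : ZMod t, (-1 : ℝ) = -(t : ℝ) := by
    rw [Finset.sum_const, Finset.card_univ, ZMod.card, nsmul_eq_mul]; ring
  have hsum_t : ∑ _i : ZMod t, (1 : ℝ) = (t : ℝ) := by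
    rw [Finset.sum_const, Finset.card_univ, ZMod.card, nsmul_eq_mul]; ring
  have hbound1 : ∀ s ∈ M.edgeSet, -(t : ℝ) ≤ cw s ∧ cw s ≤ 0 := by
    intro s hs
    constructor
    · rw [← hsum_neg_t, hcw]
      apply Finset.sum_le_sum
      intro i _
      rw [ht1 s hs i]
      have := (hind01 _ (inferInstance : Decidable (s = s(v (i + 1), f (v (i + 1)))))).2
      linarith
    · rw [hcw]
      apply Finset.sum_nonpos
      intro i _
      rw [ht1 s hs i]
      have := (hind01 _ (inferInstance : Decidable (s = s(v (i + 1), f (v (i + 1)))))).1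
      linarith
  have hbound2 : ∀ (s : Sym2 V), s ∉ M.edgeSet → 0 ≤ cw s ∧ cw s ≤ (t : ℝ) := by
    intro s hs
    constructor
    · rw [hcw]
      apply Finset.sum_nonneg
      intro i _
      rw [ht2 s hs i]
      have := (hind01 _ (inferInstance : Decidable (s = s((e i).1.1, (e i).1.2)))).1
      linarith
    · rw [← hsum_t, hcw]
      apply Finset.sum_le_sum
      intro i _
      rw [ht2 s hs i]
      have := (hind01 _ (inferInstance : Decidable (s = s((e i).1.1, (e i).1.2)))).2
      linarith
  refine ⟨fun s => matchInd M s + (t : ℝ)⁻¹ * cw s, ⟨?_, ?_, ?_, ?_⟩, ?_⟩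
  · -- nonneg
    intro s
    show 0 ≤ matchInd M s + (t : ℝ)⁻¹ * cw s
    by_cases hs : s ∈ M.edgeSet
    · obtain ⟨hl, _⟩ := hbound1 s hs
      simp only [matchInd]
      rw [if_pos hs]
      have h1 : (t : ℝ)⁻¹ * (-(t : ℝ)) ≤ (t : ℝ)⁻¹ * cw s :=
        mul_le_mul_of_nonneg_left hl (by positivity)
      have h2 : (t : ℝ)⁻¹ * (-(t : ℝ)) = -1 := by field_simp
      linarith
    · obtain ⟨hl, _⟩ := hbound2 s hs
      simp only [matchInd]
      rw [if_neg hs]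
      have h1 : 0 ≤ (t : ℝ)⁻¹ * cw s := mul_nonneg (by positivity) hl
      linarith
  · -- le one
    intro s
    show matchInd M s + (t : ℝ)⁻¹ * cw s ≤ 1
    by_cases hs : s ∈ M.edgeSet
    · obtain ⟨_, hu'⟩ := hbound1 s hs
      simp only [matchInd]
      rw [if_pos hs]
      have h1 : (t : ℝ)⁻¹ * cw s ≤ 0 := mul_nonpos_of_nonneg_of_nonpos (by positivity) hu'
      linarith
    · obtain ⟨_, hu'⟩ := hbound2 s hs
      simp only [matchInd]
      rw [if_neg hs]
      have h1 : (t : ℝ)⁻¹ * cw s ≤ (t : ℝ)⁻¹ * (t : ℝ) :=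
        mul_le_mul_of_nonneg_left hu' (by positivity)
      have h2 : (t : ℝ)⁻¹ * (t : ℝ) = 1 := inv_mul_cancel₀ (ne_of_gt htcast)
      linarith
  · -- vanishing
    intro s hs
    show matchInd M s + (t : ℝ)⁻¹ * cw s = 0
    have hsM : s ∉ M.edgeSet := fun h => hs (SimpleGraph.Subgraph.edgeSet_subset M h)
    have hcz : cw s = 0 := by
      rw [hcw]
      apply Finset.sum_eq_zero
      intro i _
      rw [if_neg (fun h : s = _ => hs (h ▸ heG i)),
        if_neg (fun h : s = _ => hs (h ▸ hmG (v (i + 1))))]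
      ring
    simp only [matchInd]
    rw [if_neg hsM, hcz]
    ring
  · -- vertex sums
    intro u
    have main : ∑ s ∈ Finset.univ.filter (fun s : Sym2 V => u ∈ s),
        (matchInd M s + (t : ℝ)⁻¹ * cw s) = 1 := ?_
    · convert main using 2
      exact (Finset.filter_congr_decidable _ _ _).trans (Finset.filter_congr_decidable _ _ _).symm
    have hzero : ∑ s ∈ Finset.univ.filter (fun s : Sym2 V => u ∈ s), cw s = 0 := by
      have hA : ∀ i : ZMod t, (if u ∈ s((e i).1.1, (e i).1.2) then (1 : ℝ) else 0) =
          (if dep i = u then (1 : ℝ) else 0) + (if arr i = u then (1 : ℝ) else 0) := by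
        intro i
        have hne := hdep_ne_arr i
        rcases hpair i with ⟨h1, h2⟩ | ⟨h1, h2⟩
        · rw [← h1, ← h2]
          exact ind_pair u _ _ hne
        · rw [← h1, ← h2, Sym2.eq_swap]
          exact ind_pair u _ _ hne
      have hB : ∀ i : ZMod t, (if u ∈ s(v (i + 1), f (v (i + 1))) then (1 : ℝ) else 0) =
          (if arr i = u then (1 : ℝ) else 0) + (if dep (i + 1) = u then (1 : ℝ) else 0) := by
        intro i
        have h1 : dep (i + 1) = f (arr i) := by
          have h0 := hdf (i + 1)
          rwa [add_sub_cancel_right] at h0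
        rcases rep_or σ f (arr i) with hr | hr
        · have hvi : v (i + 1) = arr i := by rw [← harr i, hr]
          rw [hvi, ← h1]
          apply ind_pair
          rw [h1]
          exact (f_ne hf (arr i)).symm
        · have hvi : v (i + 1) = f (arr i) := by rw [← harr i, hr]
          rw [hvi, f_invol hM hf, ← h1]
          rw [ind_pair u _ _ (by rw [h1]; exact f_ne hf (arr i))]
          ring
      calc ∑ s ∈ Finset.univ.filter (fun s : Sym2 V => u ∈ s), cw s
          = ∑ i : ZMod t, ∑ s ∈ Finset.univ.filter (fun s : Sym2 V => u ∈ s),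
              ((if s = s((e i).1.1, (e i).1.2) then (1 : ℝ) else 0) -
                (if s = s(v (i + 1), f (v (i + 1))) then (1 : ℝ) else 0)) := by
            rw [hcw]; exact Finset.sum_comm
        _ = ∑ i : ZMod t,
              (((if dep i = u then (1 : ℝ) else 0) + (if arr i = u then (1 : ℝ) else 0)) -
                ((if arr i = u then (1 : ℝ) else 0) + (if dep (i + 1) = u then (1 : ℝ) else 0))) := by
            apply Finset.sum_congr rfl
            intro i _
            rw [Finset.sum_sub_distrib, Finset.sum_ite_eq', Finset.sum_ite_eq']
            simp only [Finset.mem_filter, Finset.mem_univ, true_and]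
            rw [← hA i, ← hB i]
        _ = (∑ i : ZMod t, (if dep i = u then (1 : ℝ) else 0) +
              ∑ i : ZMod t, (if arr i = u then (1 : ℝ) else 0)) -
            (∑ i : ZMod t, (if arr i = u then (1 : ℝ) else 0) +
              ∑ i : ZMod t, (if dep (i + 1) = u then (1 : ℝ) else 0)) := by
            rw [Finset.sum_sub_distrib, Finset.sum_add_distrib, Finset.sum_add_distrib]
        _ = 0 := by
            have hre : ∑ i : ZMod t, (if dep (i + 1) = u then (1 : ℝ) else 0) =
                ∑ i : ZMod t, (if dep i = u then (1 : ℝ) else 0) :=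
              Fintype.sum_equiv (Equiv.addRight 1) _ _ (fun i => rfl)
            rw [hre]; ring
    rw [Finset.sum_add_distrib, matchInd_vertex_sum hM hf u, ← Finset.mul_sum, hzero]
    ring
  · -- not equal to matchInd
    intro heq
    set s0 : Sym2 V := s(v 1, f (v 1)) with hs0def
    have hs0 : s0 ∈ M.edgeSet := hmM _
    have hcwle : cw s0 ≤ -1 := by
      have hc1 : cw s0 = -∑ i : ZMod t,
          (if s0 = s(v (i + 1), f (v (i + 1))) then (1 : ℝ) else 0) := by
        rw [hcw]
        rw [← Finset.sum_neg_distrib]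
        apply Finset.sum_congr rfl
        intro i _
        rw [ht1 s0 hs0 i]
        ring
      have hc2 : (1 : ℝ) ≤ ∑ i : ZMod t,
          (if s0 = s(v (i + 1), f (v (i + 1))) then (1 : ℝ) else 0) := by
        have hsingle := Finset.single_le_sum
          (f := fun i : ZMod t => if s0 = s(v (i + 1), f (v (i + 1))) then (1 : ℝ) else 0)
          (fun i _ => (hind01 _ _).1) (Finset.mem_univ (0 : ZMod t))
        refine le_trans (le_of_eq ?_) hsingle
        show (1 : ℝ) = if s0 = s(v ((0 : ZMod t) + 1), f (v ((0 : ZMod t) + 1))) then (1 : ℝ) else 0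
        rw [if_pos (show s0 = _ by rw [hs0def, zero_add])]
      linarith
    have h3 := congrFun heq s0
    have h4 : matchInd M s0 + (t : ℝ)⁻¹ * cw s0 = matchInd M s0 := h3
    have h5 : (t : ℝ)⁻¹ * cw s0 < 0 :=
      mul_neg_of_pos_of_neg (by positivity) (by linarith)
    linarith

end Aux

/-- Let `M` be a perfect matching of `G` (with endpoints of every matching edge labelled
by opposite signs `σ`, the matching pairing being `f`). Then `M` is the unique fractional
perfect matching of `G` if and only if the local digraph `ldg(G, M)` is acyclic. -/
theorem stmt9 {V : Type*} [Fintype V] [DecidableEq V] (G : SimpleGraph V)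
    (M : G.Subgraph) (hM : M.IsPerfectMatching)
    (σ : V → Bool) (f : V → V)
    (hf : ∀ v, M.Adj v (f v)) (hσ : ∀ u v, M.Adj u v → σ u ≠ σ v) :
    (∀ w, IsFPM G w → w = matchInd M) ↔ (ldg G M σ f).Acyclic := by
  constructor
  · intro hu hcyc
    obtain ⟨t, ht, v, e, hwalk⟩ := hcyc
    obtain ⟨w', hw', hne⟩ := fpm_of_walk hM hf hσ ht v e hwalk
    exact hne (hu w' hw')
  · intro hA w hw
    by_contra hne
    exact hA (exists_walk hM hf hσ hw hne)
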